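/- Let S be a graded F-algebra concentrated in even degrees and n ≥ 1, and let R = S ⊗ F[u]/(u^{n+1}) with the truncated-product map ψ_A. Then ψ_A is graded symmetric of degree −2(n+1) and satisfies: (1) x·ψ_A(y, z) − ψ_A(xy, z) + ψ_A(x, yz) − ψ_A(x, y)·z = 0 for all x, y, z ∈ R; (2) ψ_A(1, x) = 0 for all x ∈ R; and (3) ψ_A(w, x) = 0 for all x ∈ R whenever w ∈ R² lies in S² ⊗ 1 (i.e. whenever the coefficient of 1 ⊗ u in w vanishes). -/

import Mathlib

/-- A finite-dimensional graded-commutative ℤ-graded `F`-algebra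
("graded F-algebra" in the sense of Seidel's paper). -/
structure GradedFAlg (F : Type) [Field F] where
  carrier : Type
  [ring : Ring carrier]
  [alg : Algebra F carrier]
  grading : ℤ → Submodule F carrier
  [gradedAlgebra : GradedAlgebra grading]
  [findim : FiniteDimensional F carrier]
  gcomm : ∀ (i j : ℤ) (x y : carrier), x ∈ grading i → y ∈ grading j →
    x * y = ((-1 : F) ^ (i * j)) • (y * x)

attribute [instance] GradedFAlg.ring GradedFAlg.alg GradedFAlg.gradedAlgebra GradedFAlg.findim

variable {F : Type} [Field F]

/-- A homomorphism of graded `F`-algebras. -/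
structure GradedFAlg.Hom (A B : GradedFAlg F) where
  toAlgHom : A.carrier →ₐ[F] B.carrier
  graded : ∀ (i : ℤ) (x : A.carrier), x ∈ A.grading i → toAlgHom x ∈ B.grading i

/-- The identity homomorphism of graded `F`-algebras. -/
def GradedFAlg.Hom.id (A : GradedFAlg F) : GradedFAlg.Hom A A :=
  ⟨AlgHom.id F A.carrier, fun _ _ h => h⟩

/-- A `d`-dimensional (first order infinitesimal) deformation `(R̃, t, j)` of `A`:
`t ∈ R̃^d` with `t² = 0` whose annihilator is exactly `t·R̃`, and `j : R̃ → A`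
a surjective homomorphism of graded algebras with kernel `t·R̃`. -/
structure Deformation (F : Type) [Field F] (A : GradedFAlg F) (d : ℤ) where
  alg : GradedFAlg F
  t : alg.carrier
  t_mem : t ∈ alg.grading d
  t_sq : t * t = 0
  t_ann : ∀ x : alg.carrier, t * x = 0 ↔ ∃ y : alg.carrier, x = t * y
  j : GradedFAlg.Hom alg A
  j_surj : Function.Surjective j.toAlgHom
  j_ker : ∀ x : alg.carrier, j.toAlgHom x = 0 ↔ ∃ y : alg.carrier, x = t * y

/-- A morphism of deformations over a homomorphism `f` of graded `F`-algebras. -/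
structure DefMorphismOver {A B : GradedFAlg F} (f : GradedFAlg.Hom A B) {d : ℤ}
    (D1 : Deformation F A d) (D2 : Deformation F B d) where
  toHom : GradedFAlg.Hom D1.alg D2.alg
  map_t : toHom.toAlgHom D1.t = D2.t
  over' : ∀ x, D2.j.toAlgHom (toHom.toAlgHom x) = f.toAlgHom (D1.j.toAlgHom x)

/-- Two deformations of `A` are isomorphic if there is a bijective morphism of
deformations (i.e. a morphism over the identity of `A`) between them. -/
def Deformation.Iso {A : GradedFAlg F} {d : ℤ} (D1 D2 : Deformation F A d) : Prop :=
  ∃ φ : DefMorphismOver (GradedFAlg.Hom.id A) D1 D2, Function.Bijective φ.toHom.toAlgHom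

/-- `R` is (a model of) the graded tensor product `S ⊗ F[u]/(u^{n+1})` with
`deg u = 2`: `ι : S → R` is a homomorphism of graded algebras, `u^{n+1} = 0`,
and the map `(s₀, …, s_n) ↦ Σᵢ ι(sᵢ)·uⁱ` is a linear bijection `S^{n+1} ≅ R`. -/
structure IsTensorCPn (S R : GradedFAlg F) (n : ℕ) (ι : GradedFAlg.Hom S R)
    (u : R.carrier) : Prop where
  u_mem : u ∈ R.grading 2
  u_pow : u ^ (n + 1) = 0
  free : Function.Bijective (fun c : Fin (n + 1) → S.carrier =>
    ∑ i : Fin (n + 1), ι.toAlgHom (c i) * u ^ (i : ℕ))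

/-- The bilinear map `ψ_A` on `R = S ⊗ F[u]/(u^{n+1})` is the truncated product:
`ψ_A(x ⊗ uⁱ, y ⊗ uʲ) = xy ⊗ u^{i+j−n−1}` if `i + j ≥ n + 1` and `= 0` otherwise. -/
def IsTruncatedProduct (S R : GradedFAlg F) (n : ℕ) (ι : GradedFAlg.Hom S R)
    (u : R.carrier) (ψA : R.carrier →ₗ[F] R.carrier →ₗ[F] R.carrier) : Prop :=
  ∀ (x y : S.carrier) (i j : ℕ), i ≤ n → j ≤ n →
    ψA (ι.toAlgHom x * u ^ i) (ι.toAlgHom y * u ^ j) =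
      if n + 1 ≤ i + j then ι.toAlgHom (x * y) * u ^ (i + j - (n + 1)) else 0


variable {F : Type} [Field F]

private lemma quadAdd {M : Type*} [AddCommGroup M] (A1 A2 B1 B2 C1 C2 D1 D2 : M)
    (h : A1 - B1 + C1 - D1 = 0) (h' : A2 - B2 + C2 - D2 = 0) :
    (A1 + A2) - (B1 + B2) + (C1 + C2) - (D1 + D2) = 0 := by
  have : (A1 + A2) - (B1 + B2) + (C1 + C2) - (D1 + D2)
      = (A1 - B1 + C1 - D1) + (A2 - B2 + C2 - D2) := by abel
  rw [this, h, h', add_zero]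

private lemma quadSmul {M : Type*} [AddCommGroup M] [Module F M] (c : F) (A B C D : M)
    (h : A - B + C - D = 0) : c • A - c • B + c • C - c • D = 0 := by
  rw [← smul_sub, ← smul_add, ← smul_sub, h, smul_zero]

private lemma aux_graded_decomp {F : Type} [Field F] (S R : GradedFAlg F) (n : ℕ)
    (ι : GradedFAlg.Hom S R) (u : R.carrier) (hT : IsTensorCPn S R n ι u)
    {d : ℤ} {x : R.carrier} (hx : x ∈ R.grading d) :
    ∃ c : Fin (n+1) → S.carrier, (∀ i : Fin (n+1), c i ∈ S.grading (d - 2 * (i:ℕ))) ∧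
      x = ∑ i : Fin (n+1), ι.toAlgHom (c i) * u ^ (i:ℕ) := by
  classical
  obtain ⟨c, hc⟩ := hT.free.surjective x
  refine ⟨fun i => (DirectSum.decompose S.grading (c i) (d - 2*(i:ℕ)) : S.carrier),
    fun i => SetLike.coe_mem _, ?_⟩
  have hterm : ∀ (i : ℕ) (s : S.carrier),
      ((DirectSum.decompose R.grading (ι.toAlgHom s * u ^ i)) d : R.carrier)
        = ι.toAlgHom ((DirectSum.decompose S.grading s (d - 2*(i:ℕ)) : S.carrier)) * u ^ i := by
    intro i s
    have hmem : ∀ k : ℤ,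
        ι.toAlgHom ((DirectSum.decompose S.grading s k : S.carrier)) * u ^ i
          ∈ R.grading (k + 2*(i:ℤ)) := by
      intro k
      have h1 : ι.toAlgHom ((DirectSum.decompose S.grading s k : S.carrier)) ∈ R.grading k :=
        ι.graded k _ (SetLike.coe_mem _)
      have h2 : u ^ i ∈ R.grading (2*(i:ℤ)) := by
        have := SetLike.pow_mem_graded i hT.u_mem
        rwa [show (i • (2:ℤ)) = 2*(i:ℤ) by rw [nsmul_eq_mul]; ring] at this
      exact SetLike.mul_mem_graded h1 h2
    conv_lhs => rw [← DirectSum.sum_support_decompose S.grading s]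
    rw [map_sum ι.toAlgHom, Finset.sum_mul, DirectSum.decompose_sum,
      DFinsupp.finset_sum_apply, AddSubmonoidClass.coe_finset_sum]
    rw [Finset.sum_congr rfl (fun k _ => (by
      by_cases h : k = d - 2*(i:ℤ)
      · rw [if_pos h]
        have hm := hmem k
        have hkd : k + 2*(i:ℤ) = d := by omega
        rw [hkd] at hm
        exact DirectSum.decompose_of_mem_same R.grading hm
      · rw [if_neg h]
        exact DirectSum.decompose_of_mem_ne R.grading (hmem k) (by omega) :
        ((DirectSum.decompose R.grading
          (ι.toAlgHom ((DirectSum.decompose S.grading s k : S.carrier)) * u ^ i)) d : R.carrier)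
        = if k = d - 2*(i:ℤ) then
            ι.toAlgHom ((DirectSum.decompose S.grading s k : S.carrier)) * u ^ i else 0)),
      Finset.sum_ite_eq']
    by_cases hmem2 : (d - 2*(i:ℤ)) ∈ (DirectSum.decompose S.grading s).support
    · rw [if_pos hmem2]
    · rw [if_neg hmem2, DFinsupp.notMem_support_iff.mp hmem2]
      simp
  have hx' : x = ((DirectSum.decompose R.grading x) d : R.carrier) :=
    (DirectSum.decompose_of_mem_same R.grading hx).symm
  conv_lhs => rw [hx']
  conv_lhs => rw [← hc]
  rw [DirectSum.decompose_sum, DFinsupp.finset_sum_apply, AddSubmonoidClass.coe_finset_sum]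
  exact Finset.sum_congr rfl (fun i _ => hterm (i:ℕ) (c i))

private lemma aux_S_comm {F : Type} [Field F] (S : GradedFAlg F)
    (hSeven : ∀ i : ℤ, Odd i → S.grading i = ⊥) (a b : S.carrier) : a * b = b * a := by
  classical
  refine DirectSum.Decomposition.inductionOn S.grading (motive := fun a => ∀ b, a * b = b * a)
    (by simp) ?_ (fun m m' hm hm' b => show (m + m') * b = b * (m + m') by
      rw [add_mul, mul_add, hm b, hm' b]) a b
  rintro i ⟨x, hx⟩ b
  refine DirectSum.Decomposition.inductionOn S.grading (motive := fun b => x * b = b * x)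
    (by simp) ?_ (fun m m' hm hm' => show x * (m + m') = (m + m') * x by
      rw [mul_add, add_mul, hm, hm']) b
  rintro j ⟨y, hy⟩
  rcases Int.even_or_odd i with hi | hi
  · rcases Int.even_or_odd j with hj | hj
    · rw [S.gcomm i j x y hx hy, Even.neg_one_zpow (hi.mul_right j), one_smul]
    · have : y = 0 := by
        have := hSeven j hj ▸ hy
        simpa using this
      simp [this]
  · have : x = 0 := by
      have := hSeven i hi ▸ hx
      simpa using this
    simp [this]

private lemma aux_u_central {F : Type} [Field F] (R : GradedFAlg F) (u : R.carrier)
    (hu : u ∈ R.grading 2) (r : R.carrier) : u * r = r * u := by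
  refine DirectSum.Decomposition.inductionOn R.grading (motive := fun r => u * r = r * u)
    (by simp) ?_ (fun m m' hm hm' => show u * (m + m') = (m + m') * u by
      rw [mul_add, add_mul, hm, hm']) r
  rintro j ⟨y, hy⟩
  rw [R.gcomm 2 j u y hu hy, Even.neg_one_zpow ⟨j, by ring⟩, one_smul]

/-- Let `S` be a graded `F`-algebra concentrated in even
degrees, `n ≥ 1`, and `R = S ⊗ F[u]/(u^{n+1})` with the truncated-product map
`ψ_A`. Then `ψ_A` is graded symmetric of degree `−2(n+1)` and satisfies:
(1) `x·ψ_A(y,z) − ψ_A(xy,z) + ψ_A(x,yz) − ψ_A(x,y)·z = 0`;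
(2) `ψ_A(1,x) = 0`; and
(3) `ψ_A(w,x) = 0` whenever `w ∈ R²` lies in `S² ⊗ 1`. -/
theorem truncated_product_properties
    {F : Type} [Field F] (S R : GradedFAlg F)
    (hSeven : ∀ i : ℤ, Odd i → S.grading i = ⊥)
    (n : ℕ) (hn : 1 ≤ n) (ι : GradedFAlg.Hom S R) (u : R.carrier)
    (hT : IsTensorCPn S R n ι u)
    (ψA : R.carrier →ₗ[F] R.carrier →ₗ[F] R.carrier)
    (hψA : IsTruncatedProduct S R n ι u ψA) :
    (∀ (i j : ℤ) (x y : R.carrier), x ∈ R.grading i → y ∈ R.grading j →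
      ψA x y ∈ R.grading (i + j - 2 * ((n : ℤ) + 1))) ∧
    (∀ (i j : ℤ) (x y : R.carrier), x ∈ R.grading i → y ∈ R.grading j →
      ψA x y = ((-1 : F) ^ (i * j)) • ψA y x) ∧
    (∀ x y z : R.carrier, x * ψA y z - ψA (x * y) z + ψA x (y * z) - ψA x y * z = 0) ∧
    (∀ x : R.carrier, ψA 1 x = 0) ∧
    (∀ w : R.carrier, w ∈ R.grading 2 →
      (∃ s : S.carrier, s ∈ S.grading 2 ∧ w = ι.toAlgHom s) →
      ∀ x : R.carrier, ψA w x = 0) := by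
  classical
  -- basic facts
  have hucomm : ∀ (m : ℕ) (r : R.carrier), u ^ m * r = r * u ^ m := fun m r =>
    ((Commute.pow_left (aux_u_central R u hT.u_mem r) m))
  have gen_mul : ∀ (s t : S.carrier) (i j : ℕ),
      (ι.toAlgHom s * u ^ i) * (ι.toAlgHom t * u ^ j)
        = ι.toAlgHom (s * t) * u ^ (i + j) := by
    intro s t i j
    rw [mul_assoc (ι.toAlgHom s), ← mul_assoc (u ^ i), hucomm i (ι.toAlgHom t),
      mul_assoc (ι.toAlgHom t), ← pow_add, ← mul_assoc, ← map_mul]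
  have u_zero : ∀ m : ℕ, n + 1 ≤ m → u ^ m = (0 : R.carrier) := by
    intro m hm
    have : u ^ m = u ^ (n+1) * u ^ (m - (n+1)) := by rw [← pow_add]; congr 1; omega
    rw [this, hT.u_pow, zero_mul]
  -- general (ungraded) symmetry of ψA
  have psymm : ∀ x y : R.carrier, ψA x y = ψA y x := by
    intro x y
    obtain ⟨a, ha⟩ := hT.free.surjective x
    obtain ⟨b, hb⟩ := hT.free.surjective y
    simp only at ha hb
    rw [← ha, ← hb]
    simp only [map_sum, LinearMap.sum_apply]
    rw [Finset.sum_comm]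
    refine Finset.sum_congr rfl fun j _ => Finset.sum_congr rfl fun i _ => ?_
    rw [hψA (a j) (b i) (j:ℕ) (i:ℕ) (Fin.is_le j) (Fin.is_le i),
      hψA (b i) (a j) (i:ℕ) (j:ℕ) (Fin.is_le i) (Fin.is_le j),
      aux_S_comm S hSeven (b i) (a j), Nat.add_comm (i:ℕ) (j:ℕ)]
  -- R has trivial odd grading
  have hRodd : ∀ (d : ℤ), Odd d → ∀ x ∈ R.grading d, x = 0 := by
    intro d hd x hx
    obtain ⟨c, hcmem, hceq⟩ := aux_graded_decomp S R n ι u hT hx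
    rw [hceq]
    refine Finset.sum_eq_zero fun i _ => ?_
    have : c i = 0 := by
      have hodd : Odd (d - 2 * ((i:ℕ):ℤ)) := by
        rcases hd with ⟨m, hm⟩; exact ⟨m - (i:ℕ), by omega⟩
      have := hSeven _ hodd ▸ hcmem i
      simpa using this
    simp [this]
  refine ⟨?_, ?_, ?_, ?_, ?_⟩
  · -- graded of degree -2(n+1)
    intro d e x y hx hy
    obtain ⟨a, hamem, haeq⟩ := aux_graded_decomp S R n ι u hT hx
    obtain ⟨b, hbmem, hbeq⟩ := aux_graded_decomp S R n ι u hT hy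
    rw [haeq, hbeq]
    simp only [map_sum, LinearMap.sum_apply]
    refine Submodule.sum_mem _ fun i _ => Submodule.sum_mem _ fun j _ => ?_
    rw [hψA (a j) (b i) (j:ℕ) (i:ℕ) (Fin.is_le j) (Fin.is_le i)]
    split_ifs with h
    · have h1 : ι.toAlgHom (a j * b i) ∈ R.grading ((d - 2*((j:ℕ):ℤ)) + (e - 2*((i:ℕ):ℤ))) :=
        ι.graded _ _ (SetLike.mul_mem_graded (hamem j) (hbmem i))
      have h2 := SetLike.pow_mem_graded ((j:ℕ) + (i:ℕ) - (n+1)) hT.u_mem (r := u)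
      have h3 := SetLike.mul_mem_graded h1 h2
      rwa [show (d - 2*((j:ℕ):ℤ)) + (e - 2*((i:ℕ):ℤ)) + (((j:ℕ) + (i:ℕ) - (n+1)) • (2:ℤ))
          = d + e - 2 * ((n:ℤ) + 1) by rw [nsmul_eq_mul]; omega] at h3
    · exact Submodule.zero_mem _
  · -- graded symmetry with sign
    intro d e x y hx hy
    rcases Int.even_or_odd d with hd | hd
    · rcases Int.even_or_odd e with he | he
      · rw [Even.neg_one_zpow (hd.mul_right e), one_smul, psymm]
      · rw [hRodd e he y hy]
        simp
    · rw [hRodd d hd x hx]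
      simp
  · -- cocycle identity
    intro x y z
    have hspan : ∀ w : R.carrier, w ∈ Submodule.span F
        (Set.range (fun p : S.carrier × Fin (n+1) => ι.toAlgHom p.1 * u ^ ((p.2:ℕ)))) := by
      intro w
      obtain ⟨c, hc⟩ := hT.free.surjective w
      simp only at hc
      rw [← hc]
      exact Submodule.sum_mem _ fun i _ => Submodule.subset_span ⟨(c i, i), rfl⟩
    -- key computation on generators
    have key : ∀ (a b c : S.carrier) (i j k : ℕ), i ≤ n → j ≤ n → k ≤ n →
        (ι.toAlgHom a * u ^ i) * ψA (ι.toAlgHom b * u ^ j) (ι.toAlgHom c * u ^ k)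
          - ψA ((ι.toAlgHom a * u ^ i) * (ι.toAlgHom b * u ^ j)) (ι.toAlgHom c * u ^ k)
          + ψA (ι.toAlgHom a * u ^ i) ((ι.toAlgHom b * u ^ j) * (ι.toAlgHom c * u ^ k))
          - ψA (ι.toAlgHom a * u ^ i) (ι.toAlgHom b * u ^ j) * (ι.toAlgHom c * u ^ k) = 0 := by
      intro a b c i j k hi hj hk
      rw [hψA b c j k hj hk, hψA a b i j hi hj, gen_mul a b i j, gen_mul b c j k]
      by_cases hP : n + 1 ≤ i + j
      · rw [if_pos hP, u_zero (i+j) hP, mul_zero, map_zero, LinearMap.zero_apply]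
        by_cases hQ : n + 1 ≤ j + k
        · rw [if_pos hQ, u_zero (j+k) hQ, mul_zero, map_zero, gen_mul a (b*c) i (j+k-(n+1)),
            gen_mul (a*b) c (i+j-(n+1)) k, mul_assoc,
            show i + (j + k - (n+1)) = i + j - (n+1) + k by omega]
          simp
        · rw [if_neg hQ, mul_zero, hψA a (b*c) i (j+k) hi (by omega),
            if_pos (by omega : n + 1 ≤ i + (j+k)), gen_mul (a*b) c (i+j-(n+1)) k, mul_assoc,
            show i + (j + k) - (n+1) = i + j - (n+1) + k by omega]
          simp
      · rw [if_neg hP, hψA (a*b) c (i+j) k (by omega) hk, zero_mul]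
        by_cases hQ : n + 1 ≤ j + k
        · rw [if_pos hQ, u_zero (j+k) hQ, mul_zero, map_zero,
            if_pos (by omega : n + 1 ≤ i + j + k), gen_mul a (b*c) i (j+k-(n+1)), mul_assoc,
            show i + (j + k - (n+1)) = i + j + k - (n+1) by omega]
          simp
        · rw [if_neg hQ, mul_zero, hψA a (b*c) i (j+k) hi (by omega)]
          by_cases hM : n + 1 ≤ i + j + k
          · rw [if_pos hM, if_pos (by omega : n + 1 ≤ i + (j+k)), mul_assoc,
              show i + (j + k) - (n+1) = i + j + k - (n+1) by omega]
            simp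
          · rw [if_neg hM, if_neg (by omega : ¬ n + 1 ≤ i + (j+k))]
            simp
    -- extend by (tri)linearity using span induction
    have step3 : ∀ x' y', (x' ∈ Set.range (fun p : S.carrier × Fin (n+1) =>
          ι.toAlgHom p.1 * u ^ ((p.2:ℕ)))) →
        (y' ∈ Set.range (fun p : S.carrier × Fin (n+1) => ι.toAlgHom p.1 * u ^ ((p.2:ℕ)))) →
        ∀ z' : R.carrier,
        x' * ψA y' z' - ψA (x' * y') z' + ψA x' (y' * z') - ψA x' y' * z' = 0 := by
      rintro x' y' ⟨⟨a, i⟩, rfl⟩ ⟨⟨b, j⟩, rfl⟩ z'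
      refine Submodule.span_induction (p := fun z' _ =>
        (ι.toAlgHom a * u ^ (i:ℕ)) * ψA (ι.toAlgHom b * u ^ (j:ℕ)) z'
          - ψA ((ι.toAlgHom a * u ^ (i:ℕ)) * (ι.toAlgHom b * u ^ (j:ℕ))) z'
          + ψA (ι.toAlgHom a * u ^ (i:ℕ)) ((ι.toAlgHom b * u ^ (j:ℕ)) * z')
          - ψA (ι.toAlgHom a * u ^ (i:ℕ)) (ι.toAlgHom b * u ^ (j:ℕ)) * z' = 0)
        ?_ (by simp) ?_ ?_ (hspan z')
      · rintro z'' ⟨⟨c, k⟩, rfl⟩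
        exact key a b c i j k (Fin.is_le i) (Fin.is_le j) (Fin.is_le k)
      · intro w w' _ _ hw hw'
        simp only [mul_add, map_add, LinearMap.add_apply]
        exact quadAdd _ _ _ _ _ _ _ _ hw hw'
      · intro t w _ hw
        simp only [mul_smul_comm, map_smul, LinearMap.smul_apply, smul_mul_assoc]
        exact quadSmul t _ _ _ _ hw
    have step2 : ∀ x', (x' ∈ Set.range (fun p : S.carrier × Fin (n+1) =>
          ι.toAlgHom p.1 * u ^ ((p.2:ℕ)))) →
        ∀ y' z' : R.carrier,
        x' * ψA y' z' - ψA (x' * y') z' + ψA x' (y' * z') - ψA x' y' * z' = 0 := by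
      rintro x' hx' y' z'
      refine Submodule.span_induction (p := fun y' _ => ∀ z',
        x' * ψA y' z' - ψA (x' * y') z' + ψA x' (y' * z') - ψA x' y' * z' = 0)
        ?_ (by simp) ?_ ?_ (hspan y') z'
      · intro y'' hy'' z''
        exact step3 x' y'' hx' hy'' z''
      · intro w w' _ _ hw hw' z''
        simp only [mul_add, add_mul, map_add, LinearMap.add_apply]
        exact quadAdd _ _ _ _ _ _ _ _ (hw z'') (hw' z'')
      · intro t w _ hw z''
        simp only [mul_smul_comm, smul_mul_assoc, map_smul, LinearMap.smul_apply]
        exact quadSmul t _ _ _ _ (hw z'')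
    refine Submodule.span_induction (p := fun x' _ => ∀ y' z',
      x' * ψA y' z' - ψA (x' * y') z' + ψA x' (y' * z') - ψA x' y' * z' = 0)
      ?_ (by simp) ?_ ?_ (hspan x) y z
    · intro x'' hx'' y'' z''
      exact step2 x'' hx'' y'' z''
    · intro w w' _ _ hw hw' y'' z''
      simp only [mul_add, add_mul, map_add, LinearMap.add_apply]
      exact quadAdd _ _ _ _ _ _ _ _ (hw y'' z'') (hw' y'' z'')
    · intro t w _ hw y'' z''
      simp only [mul_smul_comm, smul_mul_assoc, map_smul, LinearMap.smul_apply]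
      exact quadSmul t _ _ _ _ (hw y'' z'')
  · -- ψA 1 x = 0
    intro x
    obtain ⟨c, hc⟩ := hT.free.surjective x
    simp only at hc
    rw [← hc, show (1 : R.carrier) = ι.toAlgHom 1 * u ^ 0 by simp, map_sum]
    refine Finset.sum_eq_zero fun i _ => ?_
    rw [hψA 1 (c i) 0 (i:ℕ) (by omega) (Fin.is_le i),
      if_neg (by have := Fin.is_le i; omega)]
  · -- ψA (ι s) x = 0
    rintro w hw ⟨s, _, rfl⟩ x
    obtain ⟨c, hc⟩ := hT.free.surjective x
    simp only at hc
    rw [← hc, show ι.toAlgHom s = ι.toAlgHom s * u ^ 0 by simp, map_sum]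
    refine Finset.sum_eq_zero fun i _ => ?_
    rw [hψA s (c i) 0 (i:ℕ) (by omega) (Fin.is_le i),
      if_neg (by have := Fin.is_le i; omega)]
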